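/- If N is a normal subgroup of W_n and fΔ_k ∈ N, then every monomial element x^Λ Δ_k with pdeg(x^Λ Δ_k) ≤ pdeg(fΔ_k) belongs to N. -/

import Mathlib

open Equiv MvPolynomial

namespace Wreath

variable (p n : ℕ)

/-- The set of `pⁿ` points on which `W n` acts. -/
abbrev Pts := Fin n → ZMod p

/-- Truncation of a point: keep coordinates below `k`, zero out the rest. -/
def trunc (k : Fin n) (x : Pts p n) : Pts p n := fun j => if j < k then x j else 0

lemma trunc_update (k : Fin n) (x : Pts p n) (v : ZMod p) :
    trunc p n k (Function.update x k v) = trunc p n k x := by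
  funext j
  by_cases hj : j < k
  · simp [trunc, Function.update_of_ne (ne_of_lt hj), hj]
  · simp [trunc, hj]

/-- The permutation `FΔₖ` of `𝔽_pⁿ` sending `x` to `x - F(x₁,…,x_{k-1}) eₖ`. -/
def delta (k : Fin n) (F : Pts p n → ZMod p) : Equiv.Perm (Pts p n) where
  toFun x := Function.update x k (x k - F (trunc p n k x))
  invFun x := Function.update x k (x k + F (trunc p n k x))
  left_inv x := by
    simp only [trunc_update, Function.update_idem, Function.update_self,
      sub_add_cancel, Function.update_eq_self]
  right_inv x := by
    simp only [trunc_update, Function.update_idem, Function.update_self,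
      add_sub_cancel_right, Function.update_eq_self]

/-- A permutation of `𝔽_pⁿ` is triangular if the displacement of the `k`-th coordinate
only depends on the coordinates below `k`.  The triangular permutations form exactly the
iterated wreath product `W_n = ≀ⁿ 𝔽_p`, a Sylow `p`-subgroup of `Sym(pⁿ)`. -/
def Triangular (π : Equiv.Perm (Pts p n)) : Prop :=
  ∀ (k : Fin n) (x y : Pts p n), (∀ j : Fin n, j < k → x j = y j) →
    π x k - x k = π y k - y k

lemma Triangular.agree {π : Equiv.Perm (Pts p n)} (hπ : Triangular p n π) {k : Fin n}
    {x y : Pts p n} (h : ∀ j : Fin n, j < k → x j = y j) :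
    ∀ j : Fin n, j < k → π x j = π y j := by
  intro j hj
  have h2 := hπ j x y (fun i hi => h i (hi.trans hj))
  rw [h j hj] at h2
  exact sub_left_inj.mp h2

lemma Triangular.mul {π σ : Equiv.Perm (Pts p n)} (hπ : Triangular p n π)
    (hσ : Triangular p n σ) : Triangular p n (π * σ) := by
  intro k x y h
  have h1 := hπ k (σ x) (σ y) (hσ.agree p n h)
  have h2 := hσ k x y h
  simp only [Equiv.Perm.mul_apply]
  linear_combination h1 + h2

lemma Triangular.one : Triangular p n 1 := by
  intro k x y h
  simp [h k]

lemma Triangular.inv {π : Equiv.Perm (Pts p n)} (hπ : Triangular p n π) :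
    Triangular p n π⁻¹ := by
  intro k x y h
  have key : ∀ m : ℕ, ∀ j : Fin n, (j : ℕ) ≤ m → j < k → π⁻¹ x j = π⁻¹ y j := by
    intro m
    induction m with
    | zero =>
      intro j hj hjk
      have hb : ∀ i : Fin n, i < j → π⁻¹ x i = π⁻¹ y i := by
        intro i hi
        have hi' : (i : ℕ) < (j : ℕ) := hi
        omega
      have ht := hπ j (π⁻¹ x) (π⁻¹ y) hb
      simp only [Equiv.Perm.inv_def, Equiv.apply_symm_apply] at ht
      rw [h j hjk] at ht
      exact (sub_right_inj.mp ht)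
    | succ m ih =>
      intro j hj hjk
      have hb : ∀ i : Fin n, i < j → π⁻¹ x i = π⁻¹ y i := by
        intro i hi
        have hi' : (i : ℕ) < (j : ℕ) := hi
        exact ih i (by omega) (hi.trans hjk)
      have ht := hπ j (π⁻¹ x) (π⁻¹ y) hb
      simp only [Equiv.Perm.inv_def, Equiv.apply_symm_apply] at ht
      rw [h j hjk] at ht
      exact (sub_right_inj.mp ht)
  have hb : ∀ j : Fin n, j < k → π⁻¹ x j = π⁻¹ y j := fun j hj => key j j le_rfl hj
  have ht := hπ k (π⁻¹ x) (π⁻¹ y) hb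
  simp only [Equiv.Perm.inv_def, Equiv.apply_symm_apply] at ht
  linear_combination -ht

/-- The subgroup of triangular permutations fixing every coordinate `j` satisfying `P j`. -/
def WB (P : Fin n → Prop) : Subgroup (Equiv.Perm (Pts p n)) where
  carrier := {π | Triangular p n π ∧ ∀ (x : Pts p n) (j : Fin n), P j → π x j = x j}
  one_mem' := ⟨Triangular.one p n, by intro x j _; simp⟩
  mul_mem' := by
    rintro a b ⟨ha, ha'⟩ ⟨hb, hb'⟩
    refine ⟨ha.mul p n hb, ?_⟩
    intro x j hj
    simp only [Equiv.Perm.mul_apply]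
    rw [ha' (b x) j hj, hb' x j hj]
  inv_mem' := by
    rintro a ⟨ha, ha'⟩
    refine ⟨ha.inv p n, ?_⟩
    intro x j hj
    have h := ha' (a⁻¹ x) j hj
    rw [Equiv.Perm.inv_def, Equiv.apply_symm_apply] at h
    exact h.symm

/-- `W p n = ≀ⁿ 𝔽_p` : the iterated wreath product, realized as the group of all
triangular permutations of `𝔽_pⁿ`. -/
def W : Subgroup (Equiv.Perm (Pts p n)) := WB p n (fun _ => False)

/-- The `k`-th base subgroup `B_k` (elements `fΔₖ`, only the `k`-th coordinate moves). -/
def B (k : Fin n) : Subgroup (Equiv.Perm (Pts p n)) := WB p n (fun j => j ≠ k)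

/-- The "tail" subgroup `B_{m+1} ⋯ B_n` (0-indexed: coordinates `< m` are fixed). -/
def Btail (m : ℕ) : Subgroup (Equiv.Perm (Pts p n)) := WB p n (fun j => (j : ℕ) < m)

/-- `γ_i(W_n)` (paper indexing: `γ₁ = W_n`), as a subgroup of `Perm (𝔽_pⁿ)`. -/
def gammaP (i : ℕ) : Subgroup (Equiv.Perm (Pts p n)) :=
  Subgroup.map (W p n).subtype (Subgroup.lowerCentralSeries (⊤ : Subgroup ↥(W p n)) (i - 1))

/-- `Z_i(W_n)` (with `Z₀ = 1`), as a subgroup of `Perm (𝔽_pⁿ)`. -/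
def ZP (i : ℕ) : Subgroup (Equiv.Perm (Pts p n)) :=
  Subgroup.map (W p n).subtype (upperCentralSeries ↥(W p n) i)

/-- The element `fΔₖ` of the base subgroup `B_k` attached to a polynomial `f`. -/
noncomputable def elt (f : MvPolynomial (Fin n) (ZMod p)) (k : Fin n) : Equiv.Perm (Pts p n) :=
  delta p n k (fun t => eval t f)

/-- The monomial element `x^Λ Δₖ`. -/
noncomputable def monoElem (Λ : Fin n →₀ ℕ) (k : Fin n) : Equiv.Perm (Pts p n) :=
  elt p n (monomial Λ (1 : ZMod p)) k

/-- `pdeg(x^Λ) = Σ λⱼ pʲ` (coordinates 0-indexed). -/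
def pdegM (Λ : Fin n →₀ ℕ) : ℕ := ∑ j : Fin n, Λ j * p ^ (j : ℕ)

/-- `μₖ = p^{n-1} - p^k` (0-indexed `k`). -/
def mu (k : Fin n) : ℕ := p ^ (n - 1) - p ^ (k : ℕ)

/-- `pdeg(x^Λ Δₖ) = pdeg(x^Λ) + μₖ`. -/
def pdegMk (Λ : Fin n →₀ ℕ) (k : Fin n) : ℕ := pdegM p n Λ + mu p n k

/-- `pdeg(fΔₖ)`: maximum of the `pdeg` of the monomials of `f`, plus `μₖ`. -/
def pdegP (f : MvPolynomial (Fin n) (ZMod p)) (k : Fin n) : ℕ :=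
  f.support.sup (pdegM p n) + mu p n k

/-- `f` is a reduced polynomial: every variable appears with degree at most `p - 1`. -/
def Reduced (f : MvPolynomial (Fin n) (ZMod p)) : Prop :=
  ∀ Λ ∈ f.support, ∀ j : Fin n, Λ j ≤ p - 1

/-- `f` only involves the variables `xⱼ` with `j < k`. -/
def VarsLt (k : Fin n) (f : MvPolynomial (Fin n) (ZMod p)) : Prop :=
  ∀ Λ ∈ f.support, ∀ j : Fin n, Λ j ≠ 0 → j < k

/-- The normal closure of an element inside the group `W_n`: the smallest subgroup
containing `g` which is stable under conjugation by every element of `W_n`. -/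
def normalClosureIn (g : Equiv.Perm (Pts p n)) : Subgroup (Equiv.Perm (Pts p n)) :=
  sInf {S | g ∈ S ∧ ∀ w ∈ W p n, ∀ s ∈ S, w * s * w⁻¹ ∈ S}

/-- The canonical elementary abelian regular subgroup `T = ⟨Δ₁, …, Δₙ⟩`. -/
def T : Subgroup (Equiv.Perm (Pts p n)) :=
  Subgroup.closure (Set.range fun i : Fin n => delta p n i (fun _ => 1))

end Wreath
section Aux
open Wreath MvPolynomial Equiv

variable {p n : ℕ}

lemma delta_apply (k : Fin n) (F : Pts p n → ZMod p) (x : Pts p n) :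
    Wreath.delta p n k F x = Function.update x k (x k - F (trunc p n k x)) := rfl

lemma delta_inv_apply (k : Fin n) (F : Pts p n → ZMod p) (x : Pts p n) :
    (Wreath.delta p n k F)⁻¹ x = Function.update x k (x k + F (trunc p n k x)) := rfl

lemma delta_mul (k : Fin n) (F G : Pts p n → ZMod p) :
    Wreath.delta p n k F * Wreath.delta p n k G = Wreath.delta p n k (F + G) := by
  apply Equiv.ext
  intro x
  simp only [Perm.mul_apply, delta_apply, trunc_update, Function.update_idem,
    Function.update_self, Pi.add_apply]
  congr 1
  ring

lemma delta_zero (k : Fin n) : Wreath.delta p n k 0 = 1 := by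
  apply Equiv.ext
  intro x
  simp [delta_apply]

lemma elt_add (k : Fin n) (f g : MvPolynomial (Fin n) (ZMod p)) :
    Wreath.elt p n (f + g) k = Wreath.elt p n f k * Wreath.elt p n g k := by
  rw [Wreath.elt, Wreath.elt, Wreath.elt, delta_mul]
  congr 1
  funext t
  simp

lemma elt_zero (k : Fin n) : Wreath.elt p n (0 : MvPolynomial (Fin n) (ZMod p)) k = 1 := by
  rw [Wreath.elt]
  have : (fun t : Pts p n => eval t (0 : MvPolynomial (Fin n) (ZMod p))) = 0 := by
    funext t; simp
  rw [this, delta_zero]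

lemma elt_neg (k : Fin n) (f : MvPolynomial (Fin n) (ZMod p)) :
    Wreath.elt p n (-f) k = (Wreath.elt p n f k)⁻¹ := by
  rw [eq_inv_iff_mul_eq_one, ← elt_add, neg_add_cancel, elt_zero]

lemma elt_congr (k : Fin n) {f g : MvPolynomial (Fin n) (ZMod p)}
    (h : ∀ t : Pts p n, eval t f = eval t g) :
    Wreath.elt p n f k = Wreath.elt p n g k := by
  rw [Wreath.elt, Wreath.elt]
  congr 1
  funext t
  exact h t

lemma elt_nsmul (k : Fin n) (f : MvPolynomial (Fin n) (ZMod p)) (t : ℕ) :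
    Wreath.elt p n (t • f) k = (Wreath.elt p n f k) ^ t := by
  induction t with
  | zero => simp [elt_zero]
  | succ t ih => rw [succ_nsmul, elt_add, ih, pow_succ]

lemma delta_triangular (j : Fin n) (F : Pts p n → ZMod p) :
    Triangular p n (Wreath.delta p n j F) := by
  intro i x y h
  by_cases hij : i = j
  · subst hij
    have : trunc p n i x = trunc p n i y := by
      funext l
      by_cases hl : l < i
      · simp [Wreath.trunc, hl, h l hl]
      · simp [Wreath.trunc, hl]
    simp [delta_apply, this]
  · simp [delta_apply, Function.update_of_ne hij]

lemma delta_mem_W (j : Fin n) (F : Pts p n → ZMod p) :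
    Wreath.delta p n j F ∈ Wreath.W p n :=
  ⟨delta_triangular j F, fun _ _ h => h.elim⟩

end Aux
section Aux2
open Wreath MvPolynomial Equiv

variable {p n : ℕ}

lemma trunc_update_of_lt {j k : Fin n} (hjk : j < k) (x : Pts p n) (v : ZMod p) :
    trunc p n k (Function.update x j v) = Function.update (trunc p n k x) j v := by
  funext i
  by_cases hik : i < k
  · by_cases hij : i = j
    · subst hij; simp [Wreath.trunc, hik]
    · simp [Wreath.trunc, hik, Function.update_of_ne hij]
  · have hij : i ≠ j := by
      intro h; subst h; exact hik hjk
    simp [Wreath.trunc, hik, Function.update_of_ne hij]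

lemma trunc_update_of_ge {j k : Fin n} (hjk : ¬ k < j) (x : Pts p n) (v : ZMod p) :
    trunc p n j (Function.update x k v) = trunc p n j x := by
  funext i
  by_cases hij : i < j
  · have : i ≠ k := by intro h; subst h; exact hjk hij
    simp [Wreath.trunc, hij, Function.update_of_ne this]
  · simp [Wreath.trunc, hij]

lemma eval_congr_of_lt {j : Fin n} {u : MvPolynomial (Fin n) (ZMod p)}
    (hu : Wreath.VarsLt p n j u) {s t : Pts p n} (h : ∀ i, i < j → s i = t i) :
    eval s u = eval t u := by
  rw [eval_eq, eval_eq]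
  apply Finset.sum_congr rfl
  intro Λ hΛ
  congr 1
  apply Finset.prod_congr rfl
  intro i hi
  by_cases hΛi : Λ i = 0
  · simp [hΛi]
  · rw [h i (hu Λ hΛ i hΛi)]

lemma trunc_trunc_eval {j k : Fin n} (hjk : j < k) {u : MvPolynomial (Fin n) (ZMod p)}
    (hu : Wreath.VarsLt p n j u) (x : Pts p n) :
    eval (trunc p n j x) u = eval (trunc p n k x) u := by
  apply eval_congr_of_lt hu
  intro i hij
  simp [Wreath.trunc, hij, hij.trans hjk]

lemma eval_bind₁' (t : Fin n → ZMod p) (g : Fin n → MvPolynomial (Fin n) (ZMod p))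
    (f : MvPolynomial (Fin n) (ZMod p)) :
    eval t (bind₁ g f) = eval (fun i => eval t (g i)) f := by
  have h1 : ∀ (s : Fin n → ZMod p) (q : MvPolynomial (Fin n) (ZMod p)),
      aeval s q = eval s q := by
    intro s q
    rw [← coe_aeval_eq_eval]
    rfl
  rw [← h1, aeval_bind₁, ← h1]
  congr 1

/-- Conjugation of `fΔₖ` by the substitution permutation `uΔⱼ` (for `j < k`, `u` a
polynomial in variables below `j`) is the substitution `Xⱼ ↦ Xⱼ + u` applied to `f`. -/
lemma conj_delta {j k : Fin n} (hjk : j < k) (u f : MvPolynomial (Fin n) (ZMod p))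
    (hu : Wreath.VarsLt p n j u) :
    Wreath.delta p n j (fun t => eval t u) * Wreath.elt p n f k *
      (Wreath.delta p n j (fun t => eval t u))⁻¹
    = Wreath.elt p n (bind₁ (fun i => if i = j then X j + u else X i) f) k := by
  have hjk' : j ≠ k := ne_of_lt hjk
  apply Equiv.ext
  intro x
  simp only [Perm.mul_apply, delta_inv_apply, Wreath.elt, delta_apply]
  set U : Pts p n → ZMod p := fun t => eval t u with hU
  set v : ZMod p := x j + U (trunc p n j x) with hv
  set y : Pts p n := Function.update x j v with hy
  have hyk : y k = x k := by rw [hy, Function.update_of_ne (Ne.symm hjk')]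
  -- the evaluation identity
  have heval : eval (trunc p n k y) f
      = eval (trunc p n k x) (bind₁ (fun i => if i = j then X j + u else X i) f) := by
    rw [eval_bind₁']
    have hsub : (fun i => eval (trunc p n k x) (if i = j then X j + u else X i))
        = Function.update (trunc p n k x) j v := by
      funext i
      by_cases hij : i = j
      · subst hij
        have h1 : trunc p n k x i = x i := by simp [Wreath.trunc, hjk]
        simp only [if_pos rfl, if_true, map_add, eval_X, Function.update_self, hv, hU]
        rw [h1, trunc_trunc_eval hjk hu x]
      · simp [if_neg hij, Function.update_of_ne hij]
    rw [hsub, hy, trunc_update_of_lt hjk]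
  set c : ZMod p := y k - eval (trunc p n k y) f with hc
  set z : Pts p n := Function.update y k c with hz
  -- z agrees with x strictly below j
  have htrj : trunc p n j z = trunc p n j x := by
    rw [hz, trunc_update_of_ge (lt_asymm hjk), hy, trunc_update]
  have hzj : z j = v := by
    rw [hz, Function.update_of_ne hjk', hy, Function.update_self]
  show Function.update z j (z j - U (trunc p n j z)) = _
  rw [htrj, hzj, hv, add_sub_cancel_right]
  rw [hz, hy, Function.update_comm hjk', Function.update_idem, Function.update_comm hjk'.symm,
    Function.update_eq_self]
  rw [hc, hyk, heval]
end Aux2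
section Aux3
open Wreath MvPolynomial Equiv Finset

variable {p n : ℕ}

/-- `pdegM` as an additive monoid hom. -/
def pdegHom (p n : ℕ) : (Fin n →₀ ℕ) →+ ℕ where
  toFun := Wreath.pdegM p n
  map_zero' := by simp [Wreath.pdegM]
  map_add' := by
    intro a b
    simp [Wreath.pdegM, add_mul, Finset.sum_add_distrib]

lemma pdegM_eq_hom (Λ : Fin n →₀ ℕ) : Wreath.pdegM p n Λ = pdegHom p n Λ := rfl

lemma pdegM_add (A B : Fin n →₀ ℕ) :
    Wreath.pdegM p n (A + B) = Wreath.pdegM p n A + Wreath.pdegM p n B :=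
  (pdegHom p n).map_add A B

lemma pdegM_smul (s : ℕ) (A : Fin n →₀ ℕ) :
    Wreath.pdegM p n (s • A) = s * Wreath.pdegM p n A := by
  rw [pdegM_eq_hom, pdegM_eq_hom, map_nsmul, smul_eq_mul]

lemma pdegM_single (j : Fin n) (t : ℕ) :
    Wreath.pdegM p n (Finsupp.single j t) = t * p ^ (j : ℕ) := by
  rw [Wreath.pdegM]
  rw [Finset.sum_eq_single_of_mem j (Finset.mem_univ j)]
  · simp
  · intro i _ hij
    simp [Finsupp.single_apply, Ne.symm hij]

lemma pdegM_erase (j : Fin n) (M : Fin n →₀ ℕ) :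
    Wreath.pdegM p n (M.erase j) + M j * p ^ (j : ℕ) = Wreath.pdegM p n M := by
  conv_rhs => rw [← Finsupp.erase_add_single j M]
  rw [pdegM_add, pdegM_single]

lemma pdegM_eq_zero {Λ : Fin n →₀ ℕ} (hp : 0 < p) (h : Wreath.pdegM p n Λ = 0) : Λ = 0 := by
  rw [Wreath.pdegM, Finset.sum_eq_zero_iff] at h
  ext j
  have h1 := h j (Finset.mem_univ j)
  have hpj : 0 < p ^ (j : ℕ) := pow_pos hp _
  simp only [Finsupp.coe_zero, Pi.zero_apply]
  rcases Nat.mul_eq_zero.mp h1 with h2 | h2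
  · exact h2
  · omega

/-- digits bound -/
lemma sum_digits_lt (hp : 0 < p) (L : ℕ → ℕ) (hL : ∀ i, L i < p) (m : ℕ) :
    ∑ i ∈ Finset.range m, L i * p ^ i < p ^ m := by
  induction m with
  | zero => simp
  | succ m ih =>
    rw [Finset.sum_range_succ, pow_succ]
    have h1 : L m + 1 ≤ p := hL m
    have h2 : (L m + 1) * p ^ m ≤ p * p ^ m := Nat.mul_le_mul_right _ h1
    have h3 : 0 < p ^ m := pow_pos hp _
    nlinarith

/-- extraction of base-`p` digits -/
lemma digit_eq (hp : 0 < p) (L : ℕ → ℕ) (hL : ∀ i, L i < p) (N j₀ : ℕ) (hj : j₀ < N) :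
    (∑ i ∈ Finset.range N, L i * p ^ i) / p ^ j₀ % p = L j₀ := by
  have hsplit : (∑ i ∈ Finset.range (j₀ + 1), L i * p ^ i)
      + ∑ i ∈ Finset.Ico (j₀ + 1) N, L i * p ^ i = ∑ i ∈ Finset.range N, L i * p ^ i :=
    Finset.sum_range_add_sum_Ico _ (by omega)
  obtain ⟨cd, hcd⟩ : p ^ (j₀ + 1) ∣ ∑ i ∈ Finset.Ico (j₀ + 1) N, L i * p ^ i := by
    apply Finset.dvd_sum
    intro i hi
    rw [Finset.mem_Ico] at hi
    exact Dvd.dvd.mul_left (pow_dvd_pow p hi.1) _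
  rw [← hsplit, Finset.sum_range_succ, hcd]
  set A := ∑ i ∈ Finset.range j₀, L i * p ^ i with hA
  have hAlt : A < p ^ j₀ := sum_digits_lt hp L hL j₀
  have hre : A + L j₀ * p ^ j₀ + p ^ (j₀ + 1) * cd = A + p ^ j₀ * (L j₀ + p * cd) := by ring
  rw [hre, Nat.add_mul_div_left _ _ (pow_pos hp j₀), Nat.div_eq_of_lt hAlt, zero_add,
    Nat.add_mul_mod_self_left, Nat.mod_eq_of_lt (hL j₀)]

lemma pdegM_eq_range (Λ : Fin n →₀ ℕ) :
    Wreath.pdegM p n Λ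
      = ∑ i ∈ Finset.range n, (if h : i < n then Λ ⟨i, h⟩ else 0) * p ^ i := by
  rw [Wreath.pdegM]
  rw [← Fin.sum_univ_eq_sum_range (fun i => (if h : i < n then Λ ⟨i, h⟩ else 0) * p ^ i) n]
  apply Finset.sum_congr rfl
  intro j _
  simp

/-- base-p uniqueness: `pdegM` is injective on reduced multi-indices. -/
lemma pdegM_inj (hp : 0 < p) {Λ M : Fin n →₀ ℕ} (hΛ : ∀ j, Λ j < p) (hM : ∀ j, M j < p)
    (h : Wreath.pdegM p n Λ = Wreath.pdegM p n M) : Λ = M := by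
  set LΛ : ℕ → ℕ := fun i => if h : i < n then Λ ⟨i, h⟩ else 0 with hLΛ
  set LM : ℕ → ℕ := fun i => if h : i < n then M ⟨i, h⟩ else 0 with hLM
  have hbΛ : ∀ i, LΛ i < p := by
    intro i; rw [hLΛ]; dsimp only; split
    · apply hΛ
    · exact hp
  have hbM : ∀ i, LM i < p := by
    intro i; rw [hLM]; dsimp only; split
    · apply hM
    · exact hp
  ext j
  have d1 := digit_eq hp LΛ hbΛ n j j.isLt
  have d2 := digit_eq hp LM hbM n j j.isLt
  rw [← pdegM_eq_range] at d1 d2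
  have e1 : LΛ (j : ℕ) = Λ j := by rw [hLΛ]; simp
  have e2 : LM (j : ℕ) = M j := by rw [hLM]; simp
  rw [e1] at d1; rw [e2] at d2
  rw [← d1, ← d2, h]

/-- geometric sum -/
lemma geom_sum_eq' (hp : 0 < p) (m : ℕ) :
    (∑ i ∈ Finset.range m, (p - 1) * p ^ i) + 1 = p ^ m := by
  induction m with
  | zero => simp
  | succ m ih =>
    rw [Finset.sum_range_succ, pow_succ]
    have h4 : (p - 1) * p ^ m + p ^ m = p * p ^ m := by
      have h5 : p - 1 + 1 = p := by omega
      calc (p - 1) * p ^ m + p ^ m = (p - 1 + 1) * p ^ m := by ring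
        _ = p * p ^ m := by rw [h5]
    have h5 : p * p ^ m = p ^ m * p := mul_comm _ _
    linarith [ih, h4, h5]

end Aux3
section Aux4
open Wreath MvPolynomial Equiv Finset

variable {p n : ℕ}

/-- reduce an exponent to the representative in `[1, p-1]` (or `0`). -/
def redExp (p e : ℕ) : ℕ := if e = 0 then 0 else (e - 1) % (p - 1) + 1

lemma redExp_zero : redExp p 0 = 0 := rfl

lemma redExp_le (e : ℕ) : redExp p e ≤ e := by
  rw [redExp]
  split
  · omega
  · have := Nat.mod_le (e - 1) (p - 1)
    omega

lemma redExp_le_pred (hp : 2 ≤ p) (e : ℕ) : redExp p e ≤ p - 1 := by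
  rw [redExp]
  split
  · omega
  · have := Nat.mod_lt (e - 1) (y := p - 1) (by omega)
    omega

lemma redExp_eq_zero_iff (e : ℕ) : redExp p e = 0 ↔ e = 0 := by
  rw [redExp]; split <;> omega

lemma redExp_eq_self {e : ℕ} (h : e ≤ p - 1) : redExp p e = e := by
  rw [redExp]
  split
  · omega
  · rw [Nat.mod_eq_of_lt (by omega)]
    omega

lemma pow_redExp (hp : p.Prime) (x : ZMod p) (e : ℕ) : x ^ redExp p e = x ^ e := by
  haveI : Fact p.Prime := ⟨hp⟩
  by_cases he : e = 0
  · rw [he, redExp_zero]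
  · by_cases hx : x = 0
    · subst hx
      rw [zero_pow he, zero_pow (by rw [Ne, redExp_eq_zero_iff]; exact he)]
    · have h2 : (e - 1) % (p - 1) + 1 + (p - 1) * ((e - 1) / (p - 1)) = e := by
        have := Nat.mod_add_div (e - 1) (p - 1)
        have hp2 := hp.two_le
        omega
      have : x ^ e = x ^ ((e - 1) % (p - 1) + 1) * (x ^ (p - 1)) ^ ((e - 1) / (p - 1)) := by
        conv_lhs => rw [← h2]
        rw [pow_add, pow_mul]
      rw [this, ZMod.pow_card_sub_one_eq_one hx, one_pow, mul_one, redExp, if_neg he]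

/-- reduce a multi-index -/
noncomputable def redIdx (p : ℕ) {n : ℕ} (Λ : Fin n →₀ ℕ) : Fin n →₀ ℕ :=
  Finsupp.mapRange (redExp p) rfl Λ

lemma redIdx_apply (Λ : Fin n →₀ ℕ) (i : Fin n) : redIdx p Λ i = redExp p (Λ i) :=
  Finsupp.mapRange_apply

lemma pdegM_redIdx_le (Λ : Fin n →₀ ℕ) :
    Wreath.pdegM p n (redIdx p Λ) ≤ Wreath.pdegM p n Λ := by
  apply Finset.sum_le_sum
  intro i _
  exact Nat.mul_le_mul_right _ (by rw [redIdx_apply]; exact redExp_le _)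

lemma redIdx_eq_self {Λ : Fin n →₀ ℕ} (h : ∀ j, Λ j ≤ p - 1) : redIdx p Λ = Λ := by
  ext i
  rw [redIdx_apply, redExp_eq_self (h i)]

lemma redIdx_eq_of_pdeg_eq (hp : 0 < p) {Λ : Fin n →₀ ℕ}
    (h : Wreath.pdegM p n (redIdx p Λ) = Wreath.pdegM p n Λ) : redIdx p Λ = Λ := by
  ext i
  rw [redIdx_apply]
  by_contra hne
  have hlt : redExp p (Λ i) < Λ i := lt_of_le_of_ne (redExp_le _) hne
  have hsum : ∀ j ∈ Finset.univ (α := Fin n),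
      redIdx p Λ j * p ^ (j : ℕ) ≤ Λ j * p ^ (j : ℕ) := by
    intro j _
    exact Nat.mul_le_mul_right _ (by rw [redIdx_apply]; exact redExp_le _)
  have hstrict : redIdx p Λ i * p ^ (i : ℕ) < Λ i * p ^ (i : ℕ) := by
    apply Nat.mul_lt_mul_of_lt_of_le _ le_rfl (pow_pos hp _)
    rw [redIdx_apply]; exact hlt
  have := Finset.sum_lt_sum hsum ⟨i, Finset.mem_univ i, hstrict⟩
  rw [Wreath.pdegM, Wreath.pdegM] at h
  omega

/-- the reduction operator on polynomials -/
noncomputable def Rred (p : ℕ) {n : ℕ} (f : MvPolynomial (Fin n) (ZMod p)) :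
    MvPolynomial (Fin n) (ZMod p) :=
  ∑ M ∈ f.support, monomial (redIdx p M) (coeff M f)

lemma eval_Rred (hp : p.Prime) (t : Fin n → ZMod p) (f : MvPolynomial (Fin n) (ZMod p)) :
    eval t (Rred p f) = eval t f := by
  conv_rhs => rw [← support_sum_monomial_coeff f]
  rw [Rred, map_sum, map_sum]
  apply Finset.sum_congr rfl
  intro M _
  rw [eval_monomial, eval_monomial]
  congr 1
  rw [Finsupp.prod_pow, Finsupp.prod_pow]
  apply Finset.prod_congr rfl
  intro i _
  rw [redIdx_apply, pow_redExp hp]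

lemma coeff_Rred (Λ₀ : Fin n →₀ ℕ) (f : MvPolynomial (Fin n) (ZMod p)) :
    coeff Λ₀ (Rred p f)
      = ∑ M ∈ f.support, if redIdx p M = Λ₀ then coeff M f else 0 := by
  rw [Rred, MvPolynomial.coeff_sum]
  apply Finset.sum_congr rfl
  intro M _
  rw [coeff_monomial]

lemma support_Rred {M₀ : Fin n →₀ ℕ} {f : MvPolynomial (Fin n) (ZMod p)}
    (h : M₀ ∈ (Rred p f).support) : ∃ M ∈ f.support, redIdx p M = M₀ := by
  by_contra hc
  push_neg at hc
  rw [mem_support_iff, coeff_Rred] at h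
  apply h
  apply Finset.sum_eq_zero
  intro M hM
  rw [if_neg (hc M hM)]

end Aux4
section Aux5
open Wreath MvPolynomial Equiv Finset

variable {p n : ℕ}

lemma monomial_mul_helper (E S1 S2 : Fin n →₀ ℕ) (c q : ZMod p) :
    monomial E c * (monomial S1 (1 : ZMod p) * monomial S2 (1 : ZMod p) * C q)
      = monomial (E + S1 + S2) (c * q) := by
  rw [C_apply, monomial_mul, monomial_mul, monomial_mul]
  congr 1
  · abel
  · ring

/-- binomial expansion of a substituted monomial -/
lemma bind_monomial_expand (j : Fin n) (ν M : Fin n →₀ ℕ) (c : ZMod p) :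
    bind₁ (fun i => if i = j then X j + monomial ν (1 : ZMod p) else X i) (monomial M c)
      = ∑ t ∈ Finset.range (M j + 1),
          monomial (M.erase j + Finsupp.single j t + (M j - t) • ν)
            (c * ((M j).choose t : ZMod p)) := by
  set u : MvPolynomial (Fin n) (ZMod p) := monomial ν (1 : ZMod p) with hu
  have hM : monomial M c = monomial (M.erase j) c * X j ^ (M j) := by
    rw [X_pow_eq_monomial, monomial_mul, mul_one, Finsupp.erase_add_single]
  rw [hM, map_mul, map_pow, bind₁_X_right, if_pos rfl]
  have hfix : bind₁ (fun i => if i = j then X j + u else X i) (monomial (M.erase j) c)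
      = monomial (M.erase j) c := by
    rw [bind₁_monomial]
    have hprod : ∏ i ∈ (M.erase j).support,
        (if i = j then X j + u else X i) ^ (M.erase j) i
        = ∏ i ∈ (M.erase j).support, (X i : MvPolynomial (Fin n) (ZMod p)) ^ (M.erase j) i := by
      apply Finset.prod_congr rfl
      intro i hi
      have hij : i ≠ j := by
        intro h
        subst h
        rw [Finsupp.mem_support_iff, Finsupp.erase_same] at hi
        exact hi rfl
      rw [if_neg hij]
    rw [hprod, ← Finsupp.prod, ← monomial_eq]
  rw [hfix, add_pow, Finset.mul_sum]
  apply Finset.sum_congr rfl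
  intro t _
  rw [X_pow_eq_monomial, hu, monomial_pow, one_pow,
    show (((M j).choose t : ℕ) : MvPolynomial (Fin n) (ZMod p))
        = C (((M j).choose t : ℕ) : ZMod p) from (map_natCast C _).symm]
  rw [monomial_mul_helper]

/-- the multi-index `ν = (p-1, …, p-1, 0, …)` (entries below `jm`). -/
noncomputable def nuIdx (p : ℕ) {n : ℕ} (jm : Fin n) : Fin n →₀ ℕ :=
  ∑ i ∈ Finset.univ.filter (fun i : Fin n => i < jm), Finsupp.single i (p - 1)

lemma nuIdx_apply (jm i : Fin n) : nuIdx p jm i = if i < jm then p - 1 else 0 := by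
  rw [nuIdx, Finsupp.finset_sum_apply]
  rw [Finset.sum_congr rfl (fun i' _ => Finsupp.single_apply)]
  rw [Finset.sum_ite_eq' (Finset.univ.filter (fun i : Fin n => i < jm)) i (fun _ => p - 1)]
  simp

lemma nuIdx_pdeg (hp : 0 < p) (jm : Fin n) :
    Wreath.pdegM p n (nuIdx p jm) + 1 = p ^ (jm : ℕ) := by
  rw [pdegM_eq_hom, nuIdx, map_sum]
  have h1 : ∀ i ∈ Finset.univ.filter (fun i : Fin n => i < jm),
      pdegHom p n (Finsupp.single i (p - 1)) = (p - 1) * p ^ (i : ℕ) := by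
    intro i _
    rw [← pdegM_eq_hom, pdegM_single]
  rw [Finset.sum_congr rfl h1, Finset.sum_filter]
  have h2 : ∀ i : Fin n, (if i < jm then (p - 1) * p ^ (i : ℕ) else 0)
      = (fun m : ℕ => if m < (jm : ℕ) then (p - 1) * p ^ m else 0) (i : ℕ) := by
    intro i
    simp only [Fin.lt_def]
  rw [Finset.sum_congr rfl (fun i _ => h2 i),
    Fin.sum_univ_eq_sum_range (fun m => if m < (jm : ℕ) then (p - 1) * p ^ m else 0) n,
    ← Finset.sum_filter]
  have h3 : (Finset.range n).filter (fun m => m < (jm : ℕ)) = Finset.range (jm : ℕ) := by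
    ext m
    simp only [Finset.mem_filter, Finset.mem_range]
    have := jm.isLt
    omega
  rw [h3, geom_sum_eq' hp]

lemma nuIdx_lt {jm i : Fin n} (h : nuIdx p jm i ≠ 0) : i < jm := by
  rw [nuIdx_apply] at h
  by_contra hc
  rw [if_neg hc] at h
  exact h rfl

lemma nuIdx_le (jm i : Fin n) : nuIdx p jm i ≤ p - 1 := by
  rw [nuIdx_apply]
  split <;> omega

/-- `pdeg` of the indices appearing in the expansion -/
lemma pdeg_expIdx (hp : 0 < p) (jm : Fin n) (M : Fin n →₀ ℕ) {t : ℕ} (ht : t ≤ M jm) :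
    Wreath.pdegM p n (M.erase jm + Finsupp.single jm t + (M jm - t) • nuIdx p jm)
      + (M jm - t) = Wreath.pdegM p n M := by
  rw [pdegM_add, pdegM_add, pdegM_single, pdegM_smul]
  have he := pdegM_erase (p := p) jm M
  have hν := nuIdx_pdeg (n := n) hp jm
  have h1 : (M jm - t) * Wreath.pdegM p n (nuIdx p jm) + (M jm - t)
      = (M jm - t) * p ^ (jm : ℕ) := by
    rw [← hν]; ring
  have h2 : t * p ^ (jm : ℕ) + (M jm - t) * p ^ (jm : ℕ) = M jm * p ^ (jm : ℕ) := by
    rw [← add_mul]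
    congr 1
    omega
  linarith [he, h1, h2]

end Aux5
section Aux6
open Wreath MvPolynomial Equiv Finset

variable {p n : ℕ}

/-- The polynomials `g` with `gΔₖ ∈ N`, as an additive subgroup. -/
def Ssub (p n : ℕ) (k : Fin n) (N : Subgroup (Equiv.Perm (Pts p n))) :
    AddSubgroup (MvPolynomial (Fin n) (ZMod p)) where
  carrier := {g | Wreath.elt p n g k ∈ N}
  zero_mem' := by
    simp only [Set.mem_setOf_eq, elt_zero]
    exact one_mem N
  add_mem' := by
    intro a b ha hb
    simp only [Set.mem_setOf_eq, elt_add]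
    exact mul_mem ha hb
  neg_mem' := by
    intro a ha
    simp only [Set.mem_setOf_eq, elt_neg]
    exact inv_mem ha

lemma mem_Ssub {k : Fin n} {N : Subgroup (Equiv.Perm (Pts p n))}
    {g : MvPolynomial (Fin n) (ZMod p)} :
    g ∈ Ssub p n k N ↔ Wreath.elt p n g k ∈ N := Iff.rfl

lemma Ssub_smul (hp : p.Prime) {k : Fin n} {N : Subgroup (Equiv.Perm (Pts p n))}
    (c : ZMod p) {g : MvPolynomial (Fin n) (ZMod p)} (hg : g ∈ Ssub p n k N) :
    c • g ∈ Ssub p n k N := by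
  haveI : NeZero p := ⟨hp.pos.ne'⟩
  have h1 : c • g = (c.val : ℕ) • g := by
    rw [← Nat.cast_smul_eq_nsmul (ZMod p), ZMod.natCast_zmod_val]
  rw [mem_Ssub, h1, elt_nsmul]
  exact pow_mem (mem_Ssub.mp hg) _

lemma Ssub_congr {k : Fin n} {N : Subgroup (Equiv.Perm (Pts p n))}
    {g g' : MvPolynomial (Fin n) (ZMod p)} (h : ∀ t : Pts p n, eval t g = eval t g')
    (hg : g ∈ Ssub p n k N) : g' ∈ Ssub p n k N := by
  rw [mem_Ssub, ← elt_congr k h]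
  exact hg

lemma Ssub_subst {k : Fin n} {N : Subgroup (Equiv.Perm (Pts p n))}
    (hNnorm : ∀ w ∈ Wreath.W p n, ∀ g ∈ N, w * g * w⁻¹ ∈ N)
    {j : Fin n} (hjk : j < k) (u : MvPolynomial (Fin n) (ZMod p))
    (hu : Wreath.VarsLt p n j u) {g : MvPolynomial (Fin n) (ZMod p)}
    (hg : g ∈ Ssub p n k N) :
    bind₁ (fun i => if i = j then X j + u else X i) g ∈ Ssub p n k N := by
  have h1 := hNnorm (Wreath.delta p n j (fun t => eval t u)) (delta_mem_W j _)
    (Wreath.elt p n g k) hg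
  rwa [conj_delta hjk u g hu] at h1

end Aux6
section Aux7
open Wreath MvPolynomial Equiv Finset

variable {p n : ℕ}

lemma h_expansion (jm : Fin n) (g : MvPolynomial (Fin n) (ZMod p)) :
    bind₁ (fun i => if i = jm then X jm + monomial (nuIdx p jm) (1 : ZMod p) else X i) g - g
      = ∑ M ∈ g.support, ∑ t ∈ Finset.range (M jm),
          monomial (M.erase jm + Finsupp.single jm t + (M jm - t) • nuIdx p jm)
            (coeff M g * ((M jm).choose t : ZMod p)) := by
  set ν := nuIdx p jm with hν
  set sub : Fin n → MvPolynomial (Fin n) (ZMod p) :=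
    fun i => if i = jm then X jm + monomial ν (1 : ZMod p) else X i with hsub
  have step1 : bind₁ sub g - g
      = ∑ M ∈ g.support, (bind₁ sub (monomial M (coeff M g)) - monomial M (coeff M g)) := by
    rw [Finset.sum_sub_distrib, ← map_sum, support_sum_monomial_coeff]
  rw [step1]
  apply Finset.sum_congr rfl
  intro M _
  rw [hsub, bind_monomial_expand jm ν M (coeff M g), Finset.sum_range_succ]
  have hlast : monomial (M.erase jm + Finsupp.single jm (M jm) + (M jm - M jm) • ν)
      (coeff M g * ((M jm).choose (M jm) : ZMod p)) = monomial M (coeff M g) := by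
    rw [Nat.sub_self, zero_smul, add_zero, Finsupp.erase_add_single, Nat.choose_self,
      Nat.cast_one, mul_one]
  rw [hlast, add_sub_cancel_right]

lemma support_h_expansion {jm : Fin n} {g : MvPolynomial (Fin n) (ZMod p)}
    {M₀ : Fin n →₀ ℕ}
    (h : M₀ ∈ (∑ M ∈ g.support, ∑ t ∈ Finset.range (M jm),
          monomial (M.erase jm + Finsupp.single jm t + (M jm - t) • nuIdx p jm)
            (coeff M g * ((M jm).choose t : ZMod p))).support) :
    ∃ M ∈ g.support, ∃ t < M jm,
      M.erase jm + Finsupp.single jm t + (M jm - t) • nuIdx p jm = M₀ := by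
  classical
  have h1 := MvPolynomial.support_sum h
  obtain ⟨M, hM, h2⟩ := Finset.mem_biUnion.mp h1
  have h3 := MvPolynomial.support_sum h2
  obtain ⟨t, ht, h4⟩ := Finset.mem_biUnion.mp h3
  have h5 := support_monomial_subset h4
  exact ⟨M, hM, t, Finset.mem_range.mp ht, (Finset.mem_singleton.mp h5).symm⟩

end Aux7
section Aux8
open Wreath MvPolynomial Equiv Finset

variable {p n : ℕ}

theorem key_induction (hp : p.Prime) (k : Fin n) (N : Subgroup (Equiv.Perm (Pts p n)))
    (hNnorm : ∀ w ∈ Wreath.W p n, ∀ g ∈ N, w * g * w⁻¹ ∈ N) :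
    ∀ m : ℕ, ∀ g : MvPolynomial (Fin n) (ZMod p), g ∈ Ssub p n k N →
      Wreath.Reduced p n g → Wreath.VarsLt p n k g → g ≠ 0 →
      g.support.sup (Wreath.pdegM p n) ≤ m →
      ∀ Λ : Fin n →₀ ℕ, (∀ j, Λ j ≤ p - 1) → (∀ j, Λ j ≠ 0 → j < k) →
      Wreath.pdegM p n Λ ≤ g.support.sup (Wreath.pdegM p n) →
      monomial Λ (1 : ZMod p) ∈ Ssub p n k N := by
  haveI := Fact.mk hp
  haveI : NeZero p := ⟨hp.pos.ne'⟩
  have hp0 : 0 < p := hp.pos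
  have hp2 : 2 ≤ p := hp.two_le
  intro m
  induction m with
  | zero =>
    intro g hgS hgred hgvars hgne hgD Λ hΛred hΛvars hΛle
    -- degree 0 : g is a nonzero constant and Λ = 0
    have hD0 : g.support.sup (Wreath.pdegM p n) = 0 := Nat.le_zero.mp hgD
    have hsupp : g.support.Nonempty := support_nonempty.mpr hgne
    have hsingle : g.support = {0} := by
      apply Finset.eq_singleton_iff_nonempty_unique_mem.mpr
      refine ⟨hsupp, ?_⟩
      intro M hM
      have h1 : Wreath.pdegM p n M ≤ 0 := hD0 ▸ Finset.le_sup hM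
      exact pdegM_eq_zero hp0 (Nat.le_zero.mp h1)
    have hΛ0 : Λ = 0 := pdegM_eq_zero hp0 (by omega)
    set c0 := coeff 0 g with hc0
    have hg : g = monomial 0 c0 := by
      conv_lhs => rw [← support_sum_monomial_coeff g]
      rw [hsingle, Finset.sum_singleton]
    have hc : c0 ≠ 0 := by
      rw [hc0, ← mem_support_iff, hsingle]
      exact Finset.mem_singleton_self 0
    have heq : monomial Λ (1 : ZMod p) = c0⁻¹ • g := by
      rw [hΛ0, hg, smul_monomial, smul_eq_mul, inv_mul_cancel₀ hc]
    rw [heq]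
    exact Ssub_smul hp _ hgS
  | succ m ih =>
    intro g hgS hgred hgvars hgne hgD Λ hΛred hΛvars hΛle
    by_cases hDm : g.support.sup (Wreath.pdegM p n) ≤ m
    · exact ih g hgS hgred hgvars hgne hDm Λ hΛred hΛvars hΛle
    have hD : g.support.sup (Wreath.pdegM p n) = m + 1 := le_antisymm hgD (by omega)
    have hsupp : g.support.Nonempty := support_nonempty.mpr hgne
    obtain ⟨Λt, hΛtmem, hΛttop⟩ := Finset.exists_mem_eq_sup _ hsupp (Wreath.pdegM p n)
    have hΛtdeg : Wreath.pdegM p n Λt = m + 1 := by rw [← hΛttop, hD]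
    have hct : coeff Λt g ≠ 0 := mem_support_iff.mp hΛtmem
    have hΛtred : ∀ i, Λt i ≤ p - 1 := hgred Λt hΛtmem
    have hΛtne : Λt ≠ 0 := by
      intro h0
      rw [h0] at hΛtdeg
      have : Wreath.pdegM p n (0 : Fin n →₀ ℕ) = 0 := map_zero (pdegHom p n)
      omega
    have hts : Λt.support.Nonempty := Finsupp.support_nonempty_iff.mpr hΛtne
    set jm := Λt.support.min' hts with hjm
    have hjmem : jm ∈ Λt.support := Finset.min'_mem _ _
    have hlm : Λt jm ≠ 0 := Finsupp.mem_support_iff.mp hjmem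
    have hlow : ∀ i : Fin n, i < jm → Λt i = 0 := by
      intro i hi
      by_contra hne
      exact absurd (Finset.min'_le _ i (Finsupp.mem_support_iff.mpr hne)) (not_le.mpr hi)
    have hjk : jm < k := hgvars Λt hΛtmem jm hlm
    set lam := Λt jm with hlamdef
    have hlam1 : 1 ≤ lam := Nat.one_le_iff_ne_zero.mpr hlm
    have hlamp : lam ≤ p - 1 := hΛtred jm
    set ν := nuIdx p jm with hν
    set u : MvPolynomial (Fin n) (ZMod p) := monomial ν (1 : ZMod p) with hu
    have huvars : Wreath.VarsLt p n jm u := by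
      intro Λ' hΛ' i hi
      have hΛ'ν : Λ' = ν := by
        rw [hu] at hΛ'
        have := support_monomial_subset hΛ'
        exact Finset.mem_singleton.mp this
      exact nuIdx_lt (hΛ'ν ▸ hi)
    set h := bind₁ (fun i => if i = jm then X jm + u else X i) g - g with hh
    have hhS : h ∈ Ssub p n k N :=
      sub_mem (Ssub_subst hNnorm hjk u huvars hgS) hgS
    have hexp : h = ∑ M ∈ g.support, ∑ t ∈ Finset.range (M jm),
        monomial (M.erase jm + Finsupp.single jm t + (M jm - t) • ν)
          (coeff M g * ((M jm).choose t : ZMod p)) := h_expansion jm g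
    -- pdeg bound for the support of h
    have hbound : ∀ M₀ ∈ h.support, Wreath.pdegM p n M₀ ≤ m := by
      intro M₀ hM₀
      rw [hexp] at hM₀
      obtain ⟨M, hM, t, ht, hidx⟩ := support_h_expansion hM₀
      have h1 := pdeg_expIdx (n := n) hp0 jm M (le_of_lt ht)
      rw [hidx] at h1
      have h2 : Wreath.pdegM p n M ≤ m + 1 := hD ▸ Finset.le_sup hM
      omega
    -- vars bound for the support of h
    have hvarsh : ∀ M₀ ∈ h.support, ∀ i, M₀ i ≠ 0 → i < k := by
      intro M₀ hM₀ i hi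
      rw [hexp] at hM₀
      obtain ⟨M, hM, t, ht, hidx⟩ := support_h_expansion hM₀
      rw [← hidx] at hi
      by_contra hik
      push_neg at hik
      have hijm : i ≠ jm := by
        intro hrfl
        rw [hrfl] at hik
        exact absurd hjk (not_lt.mpr hik)
      have e1 : Finsupp.erase jm M i = 0 := by
        rw [Finsupp.erase_ne hijm]
        by_contra hMi
        exact absurd (hgvars M hM i hMi) (not_lt.mpr hik)
      have e2 : Finsupp.single jm t i = 0 := by
        rw [Finsupp.single_apply, if_neg (fun hc => hijm hc.symm)]
      have e3 : ν i = 0 := by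
        rw [hν, nuIdx_apply, if_neg (fun hc => absurd (lt_trans hc hjk) (not_lt.mpr hik))]
      apply hi
      simp only [Finsupp.add_apply, Finsupp.smul_apply, smul_eq_mul, e1, e2, e3,
        mul_zero, add_zero, zero_add]
      exact mul_eq_zero_of_right _ e3
    -- the distinguished new top index
    set Λ'' := Λt.erase jm + Finsupp.single jm (lam - 1) + (lam - (lam - 1)) • ν with hΛ''def
    have hpdegΛ'' : Wreath.pdegM p n Λ'' = m := by
      have h1 := pdeg_expIdx (n := n) hp0 jm Λt (t := lam - 1) (by omega)
      rw [← hlamdef, ← hν, ← hΛ''def] at h1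
      omega
    have hΛ''eq : Λ'' = Λt.erase jm + Finsupp.single jm (lam - 1) + ν := by
      rw [hΛ''def, show lam - (lam - 1) = 1 by omega, one_smul]
    have hΛ''red : ∀ i, Λ'' i ≤ p - 1 := by
      intro i
      rw [hΛ''eq]
      simp only [Finsupp.add_apply]
      rcases lt_trichotomy i jm with h1 | h1 | h1
      · rw [Finsupp.erase_ne (ne_of_lt h1), hlow i h1, Finsupp.single_apply,
          if_neg (ne_of_gt h1), nuIdx_apply, if_pos h1]
        omega
      · subst h1
        rw [Finsupp.erase_same, Finsupp.single_apply, if_pos rfl, nuIdx_apply,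
          if_neg (lt_irrefl _)]
        omega
      · rw [Finsupp.erase_ne (ne_of_gt h1), Finsupp.single_apply, if_neg (ne_of_lt h1),
          nuIdx_apply, if_neg (by exact fun hc => absurd (lt_trans h1 hc) (lt_irrefl _))]
        have := hΛtred i
        omega
    -- coefficient of Λ'' in h
    have hcoeffh : coeff Λ'' h = coeff Λt g * (lam : ZMod p) := by
      rw [hexp, MvPolynomial.coeff_sum]
      rw [Finset.sum_eq_single Λt]
      · rw [MvPolynomial.coeff_sum]
        rw [Finset.sum_eq_single (lam - 1)]
        · have hch : lam.choose (lam - 1) = lam := by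
            obtain ⟨l0, hl0⟩ := Nat.exists_eq_add_of_le hlam1
            rw [hl0, Nat.add_comm 1 l0, show l0 + 1 - 1 = l0 by omega,
              Nat.choose_succ_self_right]
          rw [coeff_monomial, if_pos (by rw [hΛ''def]), hch]
        · intro t ht htne
          rw [coeff_monomial, if_neg]
          intro hc
          have h1 := pdeg_expIdx (n := n) hp0 jm Λt (t := t)
            (le_of_lt (Finset.mem_range.mp ht))
          rw [hc] at h1
          rw [hpdegΛ''] at h1
          rw [hΛtdeg] at h1
          have : lam - t = 1 := by omega
          exact htne (by omega)
        · intro habs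
          exact absurd (Finset.mem_range.mpr (by omega)) habs
      · intro M hM hMne
        rw [MvPolynomial.coeff_sum]
        apply Finset.sum_eq_zero
        intro t ht
        rw [coeff_monomial, if_neg]
        intro hc
        have h1 := pdeg_expIdx (n := n) hp0 jm M (t := t) (le_of_lt (Finset.mem_range.mp ht))
        rw [hc, hpdegΛ''] at h1
        have h2 : Wreath.pdegM p n M ≤ m + 1 := hD ▸ Finset.le_sup hM
        have h3 : Wreath.pdegM p n M = m + 1 := by
          have := Finset.mem_range.mp ht
          omega
        have h4 : M = Λt := by
          apply pdegM_inj hp0 (fun j => by have := hgred M hM j; omega)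
            (fun j => by have := hΛtred j; omega)
          rw [h3, hΛtdeg]
        exact hMne h4
      · intro habs
        exact absurd hΛtmem habs
    have hlamne : ((lam : ℕ) : ZMod p) ≠ 0 := by
      rw [Ne, ZMod.natCast_eq_zero_iff]
      intro hdvd
      have := Nat.le_of_dvd (by omega) hdvd
      omega
    -- the reduced polynomial g₁
    set g₁ := Rred p h with hg₁def
    have hg₁S : g₁ ∈ Ssub p n k N :=
      Ssub_congr (fun t => (eval_Rred hp t h).symm) hhS
    have hg₁red : Wreath.Reduced p n g₁ := by
      intro M hM i
      obtain ⟨M', _, hM'⟩ := support_Rred hM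
      rw [← hM', redIdx_apply]
      exact redExp_le_pred hp2 _
    have hg₁vars : Wreath.VarsLt p n k g₁ := by
      intro M hM i hi
      obtain ⟨M', hM'm, hM'⟩ := support_Rred hM
      rw [← hM', redIdx_apply] at hi
      exact hvarsh M' hM'm i (by rw [Ne, ← redExp_eq_zero_iff (p := p)]; exact hi)
    have hcoeffg₁ : coeff Λ'' g₁ = coeff Λ'' h := by
      rw [hg₁def, coeff_Rred]
      rw [Finset.sum_eq_single Λ'']
      · rw [if_pos (redIdx_eq_self hΛ''red)]
      · intro M hM hMne
        rw [if_neg]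
        intro hc
        have h1 : Wreath.pdegM p n (redIdx p M) ≤ Wreath.pdegM p n M := pdegM_redIdx_le M
        have h2 := hbound M hM
        rw [hc, hpdegΛ''] at h1
        have h3 : Wreath.pdegM p n (redIdx p M) = Wreath.pdegM p n M := by
          rw [hc, hpdegΛ'']; omega
        exact hMne (by rw [← redIdx_eq_of_pdeg_eq hp0 h3, hc])
      · intro habs
        rw [notMem_support_iff.mp habs, if_pos (redIdx_eq_self hΛ''red)]
    have hcg₁ : coeff Λ'' g₁ ≠ 0 := by
      rw [hcoeffg₁, hcoeffh]
      exact mul_ne_zero hct hlamne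
    have hg₁ne : g₁ ≠ 0 := fun h0 => hcg₁ (by rw [h0, coeff_zero])
    have hDg₁ : g₁.support.sup (Wreath.pdegM p n) = m := by
      apply le_antisymm
      · apply Finset.sup_le
        intro M₀ hM₀
        obtain ⟨M', hM'm, hM'⟩ := support_Rred hM₀
        calc Wreath.pdegM p n M₀ = Wreath.pdegM p n (redIdx p M') := by rw [hM']
          _ ≤ Wreath.pdegM p n M' := pdegM_redIdx_le M'
          _ ≤ m := hbound M' hM'm
      · have h1 : Λ'' ∈ g₁.support := mem_support_iff.mpr hcg₁
        calc m = Wreath.pdegM p n Λ'' := hpdegΛ''.symm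
          _ ≤ g₁.support.sup (Wreath.pdegM p n) := Finset.le_sup h1
    have hIH : ∀ Λ' : Fin n →₀ ℕ, (∀ j, Λ' j ≤ p - 1) → (∀ j, Λ' j ≠ 0 → j < k) →
        Wreath.pdegM p n Λ' ≤ m → monomial Λ' (1 : ZMod p) ∈ Ssub p n k N := by
      intro Λ' h1 h2 h3
      exact ih g₁ hg₁S hg₁red hg₁vars hg₁ne (le_of_eq hDg₁) Λ' h1 h2 (by rw [hDg₁]; exact h3)
    rcases lt_or_eq_of_le hΛle with hlt | heqq
    · exact hIH Λ hΛred hΛvars (by omega)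
    · -- Λ = Λt
      have hΛeq : Λ = Λt := by
        apply pdegM_inj hp0 (fun j => by have := hΛred j; omega) (fun j => by have := hΛtred j; omega)
        rw [heqq, hΛttop]
      have hrest : (∑ M ∈ g.support.erase Λt, monomial M (coeff M g)) ∈ Ssub p n k N := by
        apply sum_mem
        intro M hM
        have hM1 : M ∈ g.support := Finset.mem_of_mem_erase hM
        have hMne : M ≠ Λt := Finset.ne_of_mem_erase hM
        have hMd : Wreath.pdegM p n M ≤ m := by
          have h4 : Wreath.pdegM p n M ≤ m + 1 := hD ▸ Finset.le_sup hM1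
          rcases lt_or_eq_of_le h4 with h5 | h5
          · omega
          · exfalso
            apply hMne
            apply pdegM_inj hp0 (fun j => by have := hgred M hM1 j; omega)
              (fun j => by have := hΛtred j; omega)
            rw [h5, hΛtdeg]
        have h6 := hIH M (hgred M hM1) (hgvars M hM1) hMd
        have h7 : monomial M (coeff M g) = (coeff M g) • monomial M (1 : ZMod p) := by
          rw [smul_monomial, smul_eq_mul, mul_one]
        rw [h7]
        exact Ssub_smul hp _ h6
      have hgdecomp : monomial Λt (coeff Λt g)
          = g - ∑ M ∈ g.support.erase Λt, monomial M (coeff M g) := by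
        rw [eq_sub_iff_add_eq,
          Finset.add_sum_erase _ (fun M => monomial M (coeff M g)) hΛtmem]
        exact support_sum_monomial_coeff g
      have hmem : monomial Λt (coeff Λt g) ∈ Ssub p n k N := by
        rw [hgdecomp]
        exact sub_mem hgS hrest
      have hfin : monomial Λ (1 : ZMod p) = (coeff Λt g)⁻¹ • monomial Λt (coeff Λt g) := by
        rw [hΛeq, smul_monomial, smul_eq_mul, inv_mul_cancel₀ hct]
      rw [hfin]
      exact Ssub_smul hp _ hmem

end Aux8

/-- if `N ⊴ W_n` and `fΔₖ ∈ N`, then every monomial element `x^Λ Δₖ` with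
`pdeg(x^Λ Δₖ) ≤ pdeg(fΔₖ)` belongs to `N`. -/
theorem normal_contains_smaller_monomials (p n : ℕ) (hp : p.Prime) (hodd : p ≠ 2)
    (N : Subgroup (Equiv.Perm (Wreath.Pts p n))) (hNW : N ≤ Wreath.W p n)
    (hNnorm : ∀ w ∈ Wreath.W p n, ∀ g ∈ N, w * g * w⁻¹ ∈ N)
    (f : MvPolynomial (Fin n) (ZMod p)) (k : Fin n) (hf0 : f ≠ 0)
    (hfr : Wreath.Reduced p n f) (hfv : Wreath.VarsLt p n k f)
    (hfN : Wreath.elt p n f k ∈ N) :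
    ∀ Λ : Fin n →₀ ℕ, (∀ j, Λ j ≤ p - 1) → (∀ j, Λ j ≠ 0 → j < k) →
      Wreath.pdegMk p n Λ k ≤ Wreath.pdegP p n f k → Wreath.monoElem p n Λ k ∈ N := by
  intro Λ hΛred hΛvars hle
  have hle' : Wreath.pdegM p n Λ ≤ f.support.sup (Wreath.pdegM p n) := by
    rw [Wreath.pdegMk, Wreath.pdegP] at hle
    omega
  have hfS : f ∈ Ssub p n k N := mem_Ssub.mpr hfN
  have hkey := key_induction hp k N hNnorm (f.support.sup (Wreath.pdegM p n)) f hfS hfr hfv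
    hf0 le_rfl Λ hΛred hΛvars hle'
  rw [Wreath.monoElem]
  exact mem_Ssub.mp hkey
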